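/- Let x : {1,…,m} → ℝ and y : {1,…,n} → ℝ, let k ≥ 1, and let (a,b) be a pair of indices such that x_a·y_b ≠ 0 and x_a·y_b is among the k largest entries of the outer product, i.e. #{(i,j) : x_i·y_j > x_a·y_b} < k. Then x_a is among the k largest or the k smallest entries of x (that is, #{i : x_i > x_a} < k or #{i : x_i < x_a} < k), and likewise y_b is among the k largest or the k smallest entries of y (that is, #{j : y_j > y_b} < k or #{j : y_j < y_b} < k). -/

import Mathlib

/-- **Top-k entries of an outer product come from top/bottom-k entries of the factors.**
Let `x : {1,…,m} → ℝ`, `y : {1,…,n} → ℝ`, `k ≥ 1`, and let `(a,b)` be such that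
`x_a·y_b ≠ 0` and `x_a·y_b` is among the `k` largest entries of the outer product
(fewer than `k` pairs `(i,j)` satisfy `x_i·y_j > x_a·y_b`). Then `x_a` is among the `k`
largest or the `k` smallest entries of `x`, and `y_b` is among the `k` largest or the `k`
smallest entries of `y`. -/
theorem stmt8 (m n k : ℕ) (hk : 1 ≤ k) (x : Fin m → ℝ) (y : Fin n → ℝ)
    (a : Fin m) (b : Fin n) (hne : x a * y b ≠ 0)
    (htop : {p : Fin m × Fin n | x a * y b < x p.1 * y p.2}.ncard < k) :
    ({i : Fin m | x a < x i}.ncard < k ∨ {i : Fin m | x i < x a}.ncard < k) ∧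
      ({j : Fin n | y b < y j}.ncard < k ∨ {j : Fin n | y j < y b}.ncard < k) := by
  have hxa : x a ≠ 0 := fun h => hne (by rw [h]; ring)
  have hyb : y b ≠ 0 := fun h => hne (by rw [h]; ring)
  have key : ∀ (s : Set (Fin m)), ((fun i => (i, b)) '' s ⊆
      {p : Fin m × Fin n | x a * y b < x p.1 * y p.2}) → s.ncard < k := by
    intro s hsub
    have h1 : s.ncard = ((fun i => (i, b)) '' s).ncard :=
      (Set.ncard_image_of_injective s (fun i j h => (Prod.mk.injEq _ _ _ _ ▸ h).1)).symm
    calc s.ncard = ((fun i => (i, b)) '' s).ncard := h1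
      _ ≤ _ := Set.ncard_le_ncard hsub (Set.toFinite _)
      _ < k := htop
  have key' : ∀ (s : Set (Fin n)), ((fun j => (a, j)) '' s ⊆
      {p : Fin m × Fin n | x a * y b < x p.1 * y p.2}) → s.ncard < k := by
    intro s hsub
    have h1 : s.ncard = ((fun j => (a, j)) '' s).ncard :=
      (Set.ncard_image_of_injective s (fun i j h => (Prod.mk.injEq _ _ _ _ ▸ h).2)).symm
    calc s.ncard = ((fun j => (a, j)) '' s).ncard := h1
      _ ≤ _ := Set.ncard_le_ncard hsub (Set.toFinite _)
      _ < k := htop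
  constructor
  · rcases hyb.lt_or_gt with h | h
    · right
      apply key
      rintro p ⟨i, hi, rfl⟩
      exact (mul_lt_mul_right_of_neg h).mpr hi
    · left
      apply key
      rintro p ⟨i, hi, rfl⟩
      exact (mul_lt_mul_iff_of_pos_right h).mpr hi
  · rcases hxa.lt_or_gt with h | h
    · right
      apply key'
      rintro p ⟨j, hj, rfl⟩
      exact (mul_lt_mul_left_of_neg h).mpr hj
    · left
      apply key'
      rintro p ⟨j, hj, rfl⟩
      exact (mul_lt_mul_iff_of_pos_left h).mpr hj
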